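/- Let G be a Lie group with Lie algebra 𝔤 semisimple, with Killing form K, and let g be a left-invariant semi-Riemannian metric on G corresponding to a nondegenerate symmetric bilinear form B on 𝔤 with associated K-symmetric isomorphism A (i.e. B(x,y) = K(x, A y)). A left-invariant vector field Z is Killing if and only if A ∘ ad_z = ad_z ∘ A, where z = Z_e. -/

import Mathlib

/-- A left-invariant vector field `Z` on a semisimple Lie group with left-invariant
semi-Riemannian metric `B` (with `B x y = K x (A y)` for the `K`-symmetric isomorphism `A`)
is Killing (i.e. `ad z` is skew-symmetric w.r.t. `B`) iff `A ∘ ad z = ad z ∘ A`. -/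
theorem stmt0 {L : Type*} [LieRing L] [LieAlgebra ℝ L] [Module.Finite ℝ L]
    [LieAlgebra.IsSemisimple ℝ L]
    (B : LinearMap.BilinForm ℝ L)
    (hBsymm : ∀ x y : L, B x y = B y x)
    (hBnd : B.Nondegenerate)
    (A : L ≃ₗ[ℝ] L)
    (hBA : ∀ x y : L, B x y = killingForm ℝ L x (A y))
    (hAsymm : ∀ x y : L, killingForm ℝ L (A x) y = killingForm ℝ L x (A y))
    (z : L) :
    (∀ x y : L, B ⁅z, x⁆ y + B ⁅z, y⁆ x = 0) ↔
      A.toLinearMap ∘ₗ LieAlgebra.ad ℝ L z = LieAlgebra.ad ℝ L z ∘ₗ A.toLinearMap := by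
  -- Killing form symmetry
  have hKsymm : ∀ x y : L, killingForm ℝ L x y = killingForm ℝ L y x := fun x y =>
    LieModule.traceForm_comm ℝ L L x y
  -- Nondegeneracy of the Killing form, derived from that of B via the equivalence A
  have hKnd : ∀ v : L, (∀ x : L, killingForm ℝ L x v = 0) → v = 0 := by
    intro v hv
    have h : A.symm v = 0 := by
      apply hBnd.1
      intro x
      rw [hBsymm, hBA, A.apply_symm_apply]
      exact hv x
    simpa using congrArg A h
  constructor
  · intro h
    ext y
    simp only [LinearMap.comp_apply, LieAlgebra.ad_apply, LinearEquiv.coe_coe]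
    rw [← sub_eq_zero]
    apply hKnd
    intro x
    have h1 : killingForm ℝ L x (A ⁅z, y⁆) = - killingForm ℝ L ⁅z, x⁆ (A y) := by
      rw [← hAsymm, hKsymm]
      have := h x y
      rw [hBA, hBA] at this
      linarith
    have h2 : killingForm ℝ L x ⁅z, A y⁆ = - killingForm ℝ L ⁅z, x⁆ (A y) := by
      rw [← LieModule.traceForm_apply_lie_apply ℝ L L x z (A y)]
      rw [← lie_skew x z, map_neg, LinearMap.neg_apply]
    simp only [map_sub]
    rw [h1, h2]
    ring
  · intro h x y
    have hA : ∀ w : L, A ⁅z, w⁆ = ⁅z, A w⁆ := fun w => by simpa using LinearMap.congr_fun h w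
    rw [hBA, hBA, hKsymm (⁅z, y⁆) (A x), hAsymm x ⁅z, y⁆, hA,
      ← LieModule.traceForm_apply_lie_apply ℝ L L x z (A y), ← lie_skew x z, map_neg,
      LinearMap.neg_apply]
    ring
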